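/- Let G1 = ⊔_{i=1}^r G_{1i} and G2 = ⊔_{i=1}^s G_{2i} be graphs on disjoint vertex sets V1 = ∪ V_{1i} and V2 = ∪ V_{2i} with r, s ≥ 2 (i.e., both disconnected). Then the set of subsets with the cut point property for the join satisfies C(G1 * G2) = {∅} ∪ ((○_{i=1}^r C(G_{1i})) ∘ {V2}) ∪ ((○_{i=1}^s C(G_{2i})) ∘ {V1}), where A ∘ B = {A ∪ B : A ∈ A, B ∈ B} and ○ denotes the iterated join of collections. -/

import Mathlib

open SimpleGraph

/-- The join of two simple graphs on disjoint vertex sets. -/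
def joinG {V1 V2 : Type} (G1 : SimpleGraph V1) (G2 : SimpleGraph V2) :
    SimpleGraph (V1 ⊕ V2) where
  Adj a b :=
    match a, b with
    | Sum.inl x, Sum.inl y => G1.Adj x y
    | Sum.inr x, Sum.inr y => G2.Adj x y
    | Sum.inl _, Sum.inr _ => True
    | Sum.inr _, Sum.inl _ => True
  symm := by
    constructor
    intro a b h
    cases a <;> cases b <;> simp_all <;> exact h.symm
  loopless := by
    constructor
    intro a
    cases a <;> simp

/-- A graph `G` contains an induced copy of the path on `k` vertices iff there is a
graph embedding (= isomorphism onto an induced subgraph) of `pathGraph k` into `G`. -/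
def HasInducedPathOn {V : Type} (G : SimpleGraph V) (k : ℕ) : Prop :=
  Nonempty (SimpleGraph.pathGraph k ↪g G)

/-- `G` is `P_k`-free. -/
def PFree {V : Type} (G : SimpleGraph V) (k : ℕ) : Prop :=
  ¬ HasInducedPathOn G k

/-- Length (number of edges) of a longest induced path of `G`. -/
noncomputable def longestInducedPathLen {V : Type} (G : SimpleGraph V) : ℕ :=
  sSup {k : ℕ | HasInducedPathOn G (k + 1)}

/-- `X` is a dominating set of `G`. -/
def IsDomSet {V : Type} (G : SimpleGraph V) (X : Set V) : Prop :=
  ∀ v ∉ X, ∃ u ∈ X, G.Adj v u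

/-- `X` is a connected dominating set of `G`. -/
def IsConnDomSet {V : Type} (G : SimpleGraph V) (X : Set V) : Prop :=
  IsDomSet G X ∧ (G.induce X).Connected

/-- A minimum connected dominating set. -/
def IsMinimumConnDomSet {V : Type} (G : SimpleGraph V) (X : Set V) : Prop :=
  IsConnDomSet G X ∧ ∀ Y : Set V, IsConnDomSet G Y → X.ncard ≤ Y.ncard

/-- Weakly closed graph: it admits a labeling of its vertices such that whenever
`{a,b}` is an edge and `c` has a label strictly between those of `a` and `b`,
then `c` is adjacent to `a` or to `b`. -/
def WeaklyClosed {V : Type} [Fintype V] (G : SimpleGraph V) : Prop :=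
  ∃ e : V ≃ Fin (Fintype.card V),
    ∀ a b c : V, G.Adj a b → e a < e c → e c < e b → (G.Adj a c ∨ G.Adj b c)

/-- Number of connected components. -/
noncomputable def numComp {V : Type} (G : SimpleGraph V) : ℕ :=
  Nat.card G.ConnectedComponent

/-- The collection `C(G)` of sets with the cut point property, together with `∅`. -/
def cutSets {V : Type} (G : SimpleGraph V) : Set (Set V) :=
  {(∅ : Set V)} ∪
    {T : Set V | T ⊂ Set.univ ∧ ∀ i ∈ T,
      numComp (G.induce (Tᶜ ∪ {i})) < numComp (G.induce Tᶜ)}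

/-- The collection `C(H)` for the induced subgraph `H` of `G` on a subset `W`,
viewed as a collection of subsets of the ambient vertex set. -/
def relCutSets {V : Type} (G : SimpleGraph V) (W : Set V) : Set (Set V) :=
  {T : Set V | T ⊆ W ∧ (T = ∅ ∨ (T ≠ W ∧ ∀ i ∈ T,
    numComp (G.induce ((W \ T) ∪ {i})) < numComp (G.induce (W \ T))))}

/-- `G` is `ℓ`-connected. -/
def LConnected {V : Type} [Fintype V] (G : SimpleGraph V) (ℓ : ℕ) : Prop :=
  ℓ + 1 ≤ Fintype.card V ∧
    ∀ A : Set V, A.ncard < ℓ → (G.induce Aᶜ).Connected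

/-- A maximal clique of `G`. -/
def IsMaxClique {V : Type} (G : SimpleGraph V) (s : Set V) : Prop :=
  G.IsClique s ∧ ∀ t : Set V, G.IsClique t → s ⊆ t → s = t

section Aux
variable {V W : Type}

lemma numComp_congr {G : SimpleGraph V} {H : SimpleGraph W} (φ : G ≃g H) :
    numComp G = numComp H := Nat.card_congr φ.connectedComponentEquiv

lemma numComp_eq_one {G : SimpleGraph V} (h : G.Connected) : numComp G = 1 := by
  rw [numComp, Nat.card_eq_one_iff_unique]
  refine ⟨⟨?_⟩, ⟨G.connectedComponentMk h.nonempty.some⟩⟩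
  exact ConnectedComponent.ind₂ fun u v => ConnectedComponent.sound (h.preconnected u v)

lemma one_le_numComp {G : SimpleGraph V} [Finite V] [Nonempty V] : 1 ≤ numComp G := by
  have : Nonempty G.ConnectedComponent := ⟨G.connectedComponentMk (Classical.arbitrary V)⟩
  exact Nat.card_pos

lemma numComp_induce_empty (G : SimpleGraph V) : numComp (G.induce (∅ : Set V)) = 0 := by
  rw [numComp, Nat.card_eq_zero]
  left
  constructor
  exact ConnectedComponent.ind fun v => (Set.notMem_empty _ v.2).elim

/-- helper: a function constant on edges is constant on reachability classes. -/
lemma eq_of_reachable {G : SimpleGraph V} {β : Sort*} (f : V → β)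
    (h : ∀ v w, G.Adj v w → f v = f w) {u w : V} (hr : G.Reachable u w) : f u = f w := by
  obtain ⟨p⟩ := hr
  induction p with
  | nil => rfl
  | cons hadj _ ih => exact (h _ _ hadj).trans ih

/-- lift a function constant on edges to connected components -/
def ccLift {V : Type} {G : SimpleGraph V} {β : Sort*} (f : V → β)
    (h : ∀ v w, G.Adj v w → f v = f w) : G.ConnectedComponent → β :=
  Quot.lift f (fun _ _ hr => eq_of_reachable f h hr)

@[simp] lemma ccLift_mk {V : Type} {G : SimpleGraph V} {β : Sort*} (f : V → β)
    (h : ∀ v w, G.Adj v w → f v = f w) (v : V) :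
    ccLift f h (G.connectedComponentMk v) = f v := rfl

open scoped Classical in
/-- components of an induced graph on a disjoint union with no cross edges. -/
noncomputable def ccSumEquiv {G : SimpleGraph V} {A B : Set V} (hd : Disjoint A B)
    (hAB : ∀ a ∈ A, ∀ b ∈ B, ¬ G.Adj a b) :
    (G.induce (A ∪ B)).ConnectedComponent ≃
      (G.induce A).ConnectedComponent ⊕ (G.induce B).ConnectedComponent where
  toFun := ccLift
    (fun v => if h : (v : V) ∈ A then
        Sum.inl ((G.induce A).connectedComponentMk ⟨v, h⟩)
      else Sum.inr ((G.induce B).connectedComponentMk ⟨v, v.2.resolve_left h⟩))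
    (by
      rintro ⟨u, hu⟩ ⟨w, hw⟩ hadj
      have hadj' : G.Adj u w := hadj
      by_cases hu' : u ∈ A <;> by_cases hw' : w ∈ A
      · simp only [hu', hw', dite_true]
        exact congrArg Sum.inl (ConnectedComponent.sound (Adj.reachable hadj'))
      · exact absurd hadj' (hAB u hu' w (hw.resolve_left hw'))
      · exact absurd hadj'.symm (hAB w hw' u (hu.resolve_left hu'))
      · simp only [hu', hw', dite_false]
        exact congrArg Sum.inr (ConnectedComponent.sound (Adj.reachable hadj')))
  invFun := Sum.elim
    (ccLift (fun v => (G.induce (A ∪ B)).connectedComponentMk ⟨v.1, Or.inl v.2⟩)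
      (by
        rintro ⟨u, hu⟩ ⟨w, hw⟩ hadj
        exact ConnectedComponent.sound (Adj.reachable hadj)))
    (ccLift (fun v => (G.induce (A ∪ B)).connectedComponentMk ⟨v.1, Or.inr v.2⟩)
      (by
        rintro ⟨u, hu⟩ ⟨w, hw⟩ hadj
        exact ConnectedComponent.sound (Adj.reachable hadj)))
  left_inv := by
    refine ConnectedComponent.ind fun v => ?_
    by_cases h : (v : V) ∈ A
    · show Sum.elim _ _ (if h : (v : V) ∈ A then _ else _) = _
      simp only [h, dite_true, Sum.elim_inl]
      rfl
    · show Sum.elim _ _ (if h : (v : V) ∈ A then _ else _) = _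
      simp only [h, dite_false, Sum.elim_inr]
      rfl
  right_inv := by
    rintro (q | q)
    · induction q using SimpleGraph.ConnectedComponent.ind with
      | _ v =>
        have hv : (v : V) ∈ A := v.2
        show (if h : (v : V) ∈ A then _ else _) = _
        simp only [hv, dite_true]
    · induction q using SimpleGraph.ConnectedComponent.ind with
      | _ v =>
        have hv : (v : V) ∉ A := fun hA => hd.ne_of_mem hA v.2 rfl
        show (if h : (v : V) ∈ A then _ else _) = _
        simp only [hv, dite_false]

lemma numComp_union [Finite V] {G : SimpleGraph V} {A B : Set V} (hd : Disjoint A B)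
    (hAB : ∀ a ∈ A, ∀ b ∈ B, ¬ G.Adj a b) :
    numComp (G.induce (A ∪ B)) = numComp (G.induce A) + numComp (G.induce B) := by
  rw [numComp, Nat.card_congr (ccSumEquiv hd hAB), Nat.card_sum]; rfl


lemma numComp_induce_congr {G : SimpleGraph V} {s t : Set V} (h : s = t) :
    numComp (G.induce s) = numComp (G.induce t) := by subst h; rfl

lemma supp_split [Finite V] (G : SimpleGraph V) (c : G.ConnectedComponent) (s : Set V) :
    numComp (G.induce s) =
      numComp (G.induce (s ∩ c.supp)) + numComp (G.induce (s \ c.supp)) := by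
  have hs : s = (s ∩ c.supp) ∪ (s \ c.supp) := (Set.inter_union_diff s c.supp).symm
  rw [numComp_induce_congr (G := G) hs]
  refine numComp_union (Set.disjoint_left.mpr fun a ha hb => hb.2 ha.2) ?_
  rintro a ⟨-, ha⟩ b ⟨-, hb⟩ hadj
  exact hb ((ConnectedComponent.mem_supp_iff _ _).mpr
    (by rw [ConnectedComponent.connectedComponentMk_eq_of_adj hadj.symm]
        exact (ConnectedComponent.mem_supp_iff _ _).mp ha))

/-- induced subgraphs correspond along an isomorphism -/
noncomputable def induceIsoOfIso {G : SimpleGraph V} {H : SimpleGraph W} (φ : G ≃g H)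
    (s : Set V) : G.induce s ≃g H.induce (φ.toEquiv '' s) where
  toEquiv := φ.toEquiv.image s
  map_rel_iff' := by
    intro a b
    simp only [Equiv.image, comap_adj, Function.Embedding.coe_subtype]
    exact φ.map_rel_iff

end Aux

section Aux2
variable {V1 V2 : Type} {G1 : SimpleGraph V1} {G2 : SimpleGraph V2}

/-- the swap isomorphism between the two joins -/
def swapIso (G1 : SimpleGraph V1) (G2 : SimpleGraph V2) : joinG G1 G2 ≃g joinG G2 G1 where
  toEquiv := Equiv.sumComm V1 V2
  map_rel_iff' := by rintro (a | a) (b | b) <;> exact Iff.rfl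

/-- the induced subgraph of a join on the left side -/
noncomputable def inlIso (G1 : SimpleGraph V1) (G2 : SimpleGraph V2) (S : Set V1) :
    G1.induce S ≃g (joinG G1 G2).induce (Sum.inl '' S) where
  toEquiv := Equiv.Set.image Sum.inl S Sum.inl_injective
  map_rel_iff' := by
    intro a b
    exact Iff.rfl

lemma numComp_inl (G1 : SimpleGraph V1) (G2 : SimpleGraph V2) (S : Set V1) :
    numComp ((joinG G1 G2).induce (Sum.inl '' S)) = numComp (G1.induce S) :=
  (numComp_congr (inlIso G1 G2 S)).symm

lemma join_induce_connected (G1 : SimpleGraph V1) (G2 : SimpleGraph V2)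
    {W : Set (V1 ⊕ V2)} {a : V1} {b : V2} (ha : Sum.inl a ∈ W) (hb : Sum.inr b ∈ W) :
    ((joinG G1 G2).induce W).Connected := by
  rw [connected_iff]
  refine ⟨?_, ⟨⟨_, ha⟩⟩⟩
  have key : ∀ u : W, ((joinG G1 G2).induce W).Reachable u ⟨Sum.inl a, ha⟩ := by
    rintro ⟨(x | y), hu⟩
    · refine (Adj.reachable (v := (⟨Sum.inr b, hb⟩ : W)) ?_).trans (Adj.reachable ?_)
      · show (joinG G1 G2).Adj (Sum.inl x) (Sum.inr b); trivial
      · show (joinG G1 G2).Adj (Sum.inr b) (Sum.inl a); trivial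
    · exact Adj.reachable (show (joinG G1 G2).Adj (Sum.inr y) (Sum.inl a) from trivial)
  intro u v
  exact (key u).trans (key v).symm

lemma cutSets_map {V W : Type} [Fintype V] [Fintype W] {G : SimpleGraph V} {H : SimpleGraph W}
    (φ : G ≃g H) {T : Set V} (hT : T ∈ cutSets G) : φ.toEquiv '' T ∈ cutSets H := by
  rcases hT with hT | ⟨hss, hcond⟩
  · left
    simp only [Set.mem_singleton_iff] at hT ⊢
    simp [hT]
  · right
    constructor
    · rw [Set.ssubset_univ_iff] at hss ⊢
      intro h
      apply hss
      have h' : φ.toEquiv '' T = φ.toEquiv '' Set.univ := by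
        rw [h, Set.image_univ, Equiv.range_eq_univ]
      exact Set.image_injective.mpr φ.toEquiv.injective h'
    · rintro j ⟨i, hi, rfl⟩
      have h1 : (φ.toEquiv '' T)ᶜ ∪ {φ.toEquiv i} = φ.toEquiv '' (Tᶜ ∪ {i}) := by
        rw [Set.image_union, Set.image_compl_eq φ.toEquiv.bijective, Set.image_singleton]
      have h2 : (φ.toEquiv '' T)ᶜ = φ.toEquiv '' Tᶜ := by
        rw [Set.image_compl_eq φ.toEquiv.bijective]
      rw [numComp_induce_congr (G := H) h1, numComp_induce_congr (G := H) h2,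
        ← numComp_congr (induceIsoOfIso φ (Tᶜ ∪ {i})), ← numComp_congr (induceIsoOfIso φ Tᶜ)]
      exact hcond i hi

end Aux2

section Main
variable {V1 V2 : Type} [Fintype V1] [Fintype V2]

lemma compl_T (S : Set V1) :
    (Sum.inl '' S ∪ Set.range Sum.inr : Set (V1 ⊕ V2))ᶜ = Sum.inl '' Sᶜ := by
  ext (x | y) <;> simp

lemma inl_union_singleton (A : Set V1) (x : V1) :
    (Sum.inl '' A ∪ {Sum.inl x} : Set (V1 ⊕ V2)) = Sum.inl '' (A ∪ {x}) := by
  rw [Set.image_union, Set.image_singleton]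

lemma local_global {G : SimpleGraph V1} (S : Set V1) (x : V1) :
    (numComp (G.induce (Sᶜ ∪ {x})) < numComp (G.induce Sᶜ) ↔
      numComp (G.induce ((Sᶜ ∩ (G.connectedComponentMk x).supp) ∪ {x})) <
        numComp (G.induce (Sᶜ ∩ (G.connectedComponentMk x).supp))) := by
  set c := G.connectedComponentMk x with hc
  have hx : x ∈ c.supp := rfl
  have e1 : (Sᶜ ∪ {x}) ∩ c.supp = (Sᶜ ∩ c.supp) ∪ {x} := by
    ext v
    simp only [Set.mem_inter_iff, Set.mem_union, Set.mem_singleton_iff]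
    constructor
    · rintro ⟨h | rfl, hs⟩
      · exact Or.inl ⟨h, hs⟩
      · exact Or.inr rfl
    · rintro (⟨h, hs⟩ | rfl)
      · exact ⟨Or.inl h, hs⟩
      · exact ⟨Or.inr rfl, hx⟩
  have e2 : (Sᶜ ∪ {x}) \ c.supp = Sᶜ \ c.supp := by
    ext v
    simp only [Set.mem_diff, Set.mem_union, Set.mem_singleton_iff]
    constructor
    · rintro ⟨h | rfl, hs⟩
      · exact ⟨h, hs⟩
      · exact absurd hx hs
    · rintro ⟨h, hs⟩
      exact ⟨Or.inl h, hs⟩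
  rw [supp_split G c (Sᶜ ∪ {x}), supp_split G c Sᶜ,
    numComp_induce_congr (G := G) e1, numComp_induce_congr (G := G) e2]
  omega

end Main

section Main1
variable {V1 V2 : Type} [Fintype V1] [Fintype V2]

set_option linter.unusedSectionVars false

lemma supp_eq_of_mem {G : SimpleGraph V1} {c : G.ConnectedComponent} {x : V1}
    (hx : x ∈ c.supp) : G.connectedComponentMk x = c := hx

lemma main1 [Nonempty V1] [Nonempty V2]
    (G1 : SimpleGraph V1) (G2 : SimpleGraph V2) (h1 : ¬ G1.Preconnected) (S : Set V1) :
    (Sum.inl '' S ∪ Set.range Sum.inr) ∈ cutSets (joinG G1 G2) ↔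
      ∃ f : G1.ConnectedComponent → Set V1,
        (∀ c, f c ∈ relCutSets G1 c.supp) ∧ S = ⋃ c, f c := by
  constructor
  · rintro (h | ⟨hss, hcond⟩)
    · exfalso
      simp only [Set.mem_singleton_iff] at h
      have : Sum.inr (Classical.arbitrary V2) ∈ (∅ : Set (V1 ⊕ V2)) := by
        rw [← h]; exact Or.inr ⟨_, rfl⟩
      exact this
    · -- global cut condition on the V1 side
      have hglob : ∀ x ∈ S, numComp (G1.induce (Sᶜ ∪ {x})) < numComp (G1.induce Sᶜ) := by
        intro x hx
        have := hcond (Sum.inl x) (Or.inl ⟨x, hx, rfl⟩)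
        rw [compl_T, inl_union_singleton, numComp_inl, numComp_inl] at this
        exact this
      refine ⟨fun c => S ∩ c.supp, fun c => ?_, ?_⟩
      · refine ⟨Set.inter_subset_right, ?_⟩
        by_cases hc : S ∩ c.supp = ∅
        · exact Or.inl hc
        right
        obtain ⟨x, hxS, hxc⟩ := Set.nonempty_iff_ne_empty.mpr hc
        have hcx : G1.connectedComponentMk x = c := supp_eq_of_mem hxc
        have hloc := (local_global S x).mp (hglob x hxS)
        rw [hcx] at hloc
        constructor
        · intro heq
          have hempty : Sᶜ ∩ c.supp = ∅ := by
            ext v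
            simp only [Set.mem_inter_iff, Set.mem_compl_iff, Set.mem_empty_iff_false,
              iff_false, not_and]
            intro hv hvc
            have heq' : S ∩ c.supp = c.supp := heq
            have hmem : v ∈ S ∩ c.supp := by rw [heq']; exact hvc
            exact hv hmem.1
          rw [numComp_induce_congr (G := G1) hempty, numComp_induce_empty] at hloc
          omega
        · intro i hi
          have hci : G1.connectedComponentMk i = c := supp_eq_of_mem hi.2
          have e5 : c.supp \ (S ∩ c.supp) = Sᶜ ∩ c.supp := by
            ext v
            simp only [Set.mem_diff, Set.mem_inter_iff, Set.mem_compl_iff]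
            tauto
          rw [numComp_induce_congr (G := G1) (congrArg (· ∪ {i}) e5),
            numComp_induce_congr (G := G1) e5]
          have := (local_global S i).mp (hglob i hi.1)
          rw [hci] at this
          exact this
      · ext x
        simp only [Set.mem_iUnion, Set.mem_inter_iff]
        exact ⟨fun hx => ⟨G1.connectedComponentMk x, hx, rfl⟩, fun ⟨c, hx, _⟩ => hx⟩
  · rintro ⟨f, hf, rfl⟩
    set S := ⋃ c, f c with hS
    have hsub : ∀ c, f c ⊆ c.supp := fun c => (hf c).1
    have hSc : ∀ c : G1.ConnectedComponent, S ∩ c.supp = f c := by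
      intro c
      ext v
      simp only [Set.mem_inter_iff, hS, Set.mem_iUnion]
      constructor
      · rintro ⟨⟨c', hv⟩, hvc⟩
        have : c' = c := by
          rw [← supp_eq_of_mem (hsub c' hv), ← supp_eq_of_mem hvc]
        exact this ▸ hv
      · intro hv
        exact ⟨⟨c, hv⟩, hsub c hv⟩
    have hD : ∀ c : G1.ConnectedComponent, Sᶜ ∩ c.supp = c.supp \ f c := by
      intro c
      ext v
      simp only [Set.mem_inter_iff, Set.mem_compl_iff, Set.mem_diff]
      constructor
      · rintro ⟨hv, hvc⟩
        exact ⟨hvc, fun hvf => hv (by rw [← hSc c] at hvf; exact hvf.1)⟩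
      · rintro ⟨hvc, hvf⟩
        exact ⟨fun hv => hvf (by rw [← hSc c]; exact ⟨hv, hvc⟩), hvc⟩
    have hDne : ∀ c : G1.ConnectedComponent, (c.supp \ f c).Nonempty := by
      intro c
      rcases (hf c).2 with h0 | ⟨hne, -⟩
      · obtain ⟨v, hv⟩ := c.exists_rep
        exact ⟨v, by rw [h0]; exact ⟨(supp_eq_of_mem (hv ▸ rfl) : _), Set.notMem_empty v⟩⟩
      · exact Set.nonempty_of_ssubset (HasSubset.Subset.ssubset_of_ne (hsub c) hne)
    have hScne : Sᶜ.Nonempty := by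
      obtain ⟨v, hv⟩ := hDne (G1.connectedComponentMk (Classical.arbitrary V1))
      exact ⟨v, by rw [← hD] at hv; exact hv.1⟩
    have htwo : 2 ≤ numComp (G1.induce Sᶜ) := by
      rw [Preconnected] at h1
      push_neg at h1
      obtain ⟨u, v, huv⟩ := h1
      have hcc : G1.connectedComponentMk u ≠ G1.connectedComponentMk v :=
        fun h => huv (ConnectedComponent.exact h)
      rw [supp_split G1 (G1.connectedComponentMk u) Sᶜ]
      have h1' : 1 ≤ numComp (G1.induce (Sᶜ ∩ (G1.connectedComponentMk u).supp)) := by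
        rw [numComp_induce_congr (G := G1) (hD _)]
        have := (hDne (G1.connectedComponentMk u)).to_subtype
        exact one_le_numComp
      have h2' : 1 ≤ numComp (G1.induce (Sᶜ \ (G1.connectedComponentMk u).supp)) := by
        obtain ⟨w, hw⟩ := hDne (G1.connectedComponentMk v)
        have hwS : w ∈ Sᶜ := by rw [← hD] at hw; exact hw.1
        have hwu : w ∉ (G1.connectedComponentMk u).supp := by
          intro h
          exact hcc ((supp_eq_of_mem h ▸ supp_eq_of_mem hw.1 : _).symm ▸ rfl)
        have : (Sᶜ \ (G1.connectedComponentMk u).supp).Nonempty := ⟨w, hwS, hwu⟩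
        have := this.to_subtype
        exact one_le_numComp
      omega
    right
    constructor
    · rw [Set.ssubset_univ_iff]
      intro h
      obtain ⟨a, ha⟩ := hScne
      have : Sum.inl a ∈ Sum.inl '' S ∪ Set.range Sum.inr := h ▸ Set.mem_univ _
      rcases this with ⟨b, hb, hba⟩ | ⟨y, hy⟩
      · exact ha (Sum.inl_injective hba ▸ hb)
      · exact Sum.inr_ne_inl hy
    · rintro (x | y) hi
      · -- x ∈ S
        have hx : x ∈ S := by
          rcases hi with ⟨b, hb, hba⟩ | ⟨y, hy⟩
          · exact Sum.inl_injective hba ▸ hb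
          · exact absurd hy Sum.inr_ne_inl
        rw [compl_T, inl_union_singleton, numComp_inl, numComp_inl]
        have hxf : x ∈ f (G1.connectedComponentMk x) := by rw [← hSc]; exact ⟨hx, rfl⟩
        rcases (hf (G1.connectedComponentMk x)).2 with h0 | ⟨-, hloc⟩
        · exact absurd (h0 ▸ hxf) (Set.notMem_empty x)
        have := hloc x hxf
        rw [← numComp_induce_congr (G := G1) (hD (G1.connectedComponentMk x)),
          ← numComp_induce_congr (G := G1)
            (congrArg (· ∪ {x}) (hD (G1.connectedComponentMk x)))] at this
        exact (local_global S x).mpr this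
      · -- inr y
        rw [compl_T]
        obtain ⟨a, ha⟩ := hScne
        have hconn : ((joinG G1 G2).induce ((Sum.inl '' Sᶜ : Set (V1 ⊕ V2)) ∪ {Sum.inr y})).Connected :=
          join_induce_connected G1 G2 (a := a) (b := y)
            (Or.inl ⟨a, ha, rfl⟩) (Or.inr rfl)
        rw [numComp_eq_one hconn, numComp_inl]
        omega

end Main1

section Final
variable {V1 V2 : Type} [Fintype V1] [Fintype V2]

lemma swap_image (G1 : SimpleGraph V1) (G2 : SimpleGraph V2) (A : Set V1) :
    (swapIso G1 G2).toEquiv '' (Sum.inl '' A ∪ Set.range Sum.inr) =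
      Sum.inr '' A ∪ Set.range Sum.inl := by
  ext (y | x) <;> simp [swapIso, Equiv.sumComm, Sum.swap, eq_comm]

theorem stmt19' [Nonempty V1] [Nonempty V2]
    (G1 : SimpleGraph V1) (G2 : SimpleGraph V2)
    (h1 : ¬ G1.Preconnected) (h2 : ¬ G2.Preconnected) :
    cutSets (joinG G1 G2) =
      {(∅ : Set (V1 ⊕ V2))} ∪
      {U : Set (V1 ⊕ V2) | ∃ f : G1.ConnectedComponent → Set V1,
        (∀ c, f c ∈ relCutSets G1 c.supp) ∧
        U = Sum.inl '' (⋃ c, f c) ∪ Set.range Sum.inr} ∪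
      {U : Set (V1 ⊕ V2) | ∃ f : G2.ConnectedComponent → Set V2,
        (∀ c, f c ∈ relCutSets G2 c.supp) ∧
        U = Sum.inr '' (⋃ c, f c) ∪ Set.range Sum.inl} := by
  ext T
  constructor
  · intro hT
    by_cases hemp : T = ∅
    · exact Or.inl (Or.inl hemp)
    by_cases hr : Set.range (Sum.inr : V2 → V1 ⊕ V2) ⊆ T
    · left; right
      set S : Set V1 := Sum.inl ⁻¹' T with hSdef
      have hTeq : T = Sum.inl '' S ∪ Set.range Sum.inr := by
        ext (x | y)
        · simp only [Set.mem_union, Set.mem_image, Set.mem_range]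
          constructor
          · intro h
            exact Or.inl ⟨x, h, rfl⟩
          · rintro (⟨b, hb, hxb⟩ | ⟨y, hy⟩)
            · exact Sum.inl_injective hxb ▸ hb
            · exact absurd hy Sum.inr_ne_inl
        · simp only [Set.mem_union, Set.mem_range]
          exact ⟨fun _ => Or.inr ⟨y, rfl⟩, fun _ => hr ⟨y, rfl⟩⟩
      obtain ⟨f, hf, hS⟩ := (main1 G1 G2 h1 S).mp (hTeq ▸ hT)
      exact ⟨f, hf, by rw [hTeq, hS]⟩
    by_cases hl : Set.range (Sum.inl : V1 → V1 ⊕ V2) ⊆ T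
    · right
      set S : Set V2 := Sum.inr ⁻¹' T with hSdef
      have hTeq : T = Sum.inr '' S ∪ Set.range Sum.inl := by
        ext (x | y)
        · simp only [Set.mem_union, Set.mem_range]
          exact ⟨fun _ => Or.inr ⟨x, rfl⟩, fun _ => hl ⟨x, rfl⟩⟩
        · simp only [Set.mem_union, Set.mem_image, Set.mem_range]
          constructor
          · intro h
            exact Or.inl ⟨y, h, rfl⟩
          · rintro (⟨b, hb, hyb⟩ | ⟨x, hx⟩)
            · exact Sum.inr_injective hyb ▸ hb
            · exact absurd hx Sum.inl_ne_inr
      have hmem := cutSets_map (swapIso G2 G1).symm hT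
      have himg : (swapIso G2 G1).symm.toEquiv '' T = Sum.inl '' S ∪ Set.range Sum.inr := by
        have : (swapIso G1 G2).toEquiv '' ((Sum.inr '' S ∪ Set.range Sum.inl : Set (V1 ⊕ V2)))
            = Sum.inl '' S ∪ Set.range Sum.inr := by
          ext (y | x) <;> simp [swapIso, Equiv.sumComm, Sum.swap, eq_comm]
        rw [hTeq]
        rw [← this]
        rfl
      rw [himg] at hmem
      obtain ⟨f, hf, hS⟩ := (main1 G2 G1 h2 S).mp hmem
      exact ⟨f, hf, by rw [hTeq, hS]⟩
    · exfalso
      rw [Set.not_subset] at hr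
      rw [Set.not_subset] at hl
      obtain ⟨ay, ⟨y, rfl⟩, hy⟩ := hr
      obtain ⟨ax, ⟨x, rfl⟩, hx⟩ := hl
      obtain ⟨i, hi⟩ := Set.nonempty_iff_ne_empty.mpr hemp
      rcases hT with h0 | ⟨hss, hcond⟩
      · exact hemp h0
      have hlt := hcond i hi
      have hc1 : ((joinG G1 G2).induce Tᶜ).Connected :=
        join_induce_connected G1 G2 (a := x) (b := y) hx hy
      have hc2 : ((joinG G1 G2).induce (Tᶜ ∪ {i})).Connected :=
        join_induce_connected G1 G2 (a := x) (b := y) (Or.inl hx) (Or.inl hy)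
      rw [numComp_eq_one hc1, numComp_eq_one hc2] at hlt
      omega
  · rintro ((h | ⟨f, hf, rfl⟩) | ⟨f, hf, rfl⟩)
    · exact Or.inl h
    · exact (main1 G1 G2 h1 _).mpr ⟨f, hf, rfl⟩
    · have hmem := (main1 G2 G1 h2 (⋃ c, f c)).mpr ⟨f, hf, rfl⟩
      have := cutSets_map (swapIso G2 G1) hmem
      rw [swap_image] at this
      exact this

end Final


theorem stmt19 {V1 V2 : Type} [Fintype V1] [Fintype V2]
    (G1 : SimpleGraph V1) (G2 : SimpleGraph V2)
    [Nonempty V1] [Nonempty V2]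
    (h1 : ¬ G1.Preconnected) (h2 : ¬ G2.Preconnected) :
    cutSets (joinG G1 G2) =
      {(∅ : Set (V1 ⊕ V2))} ∪
      {U : Set (V1 ⊕ V2) | ∃ f : G1.ConnectedComponent → Set V1,
        (∀ c, f c ∈ relCutSets G1 c.supp) ∧
        U = Sum.inl '' (⋃ c, f c) ∪ Set.range Sum.inr} ∪
      {U : Set (V1 ⊕ V2) | ∃ f : G2.ConnectedComponent → Set V2,
        (∀ c, f c ∈ relCutSets G2 c.supp) ∧
        U = Sum.inr '' (⋃ c, f c) ∪ Set.range Sum.inl} := by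
  exact stmt19' G1 G2 h1 h2
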